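/- arXiv:1311.4245 — 2 statements merged into one kernel-verified Lean document; each statement's English description precedes it below -/
import Mathlib

section
/- Let φ = [[α, β],[−β̄, ᾱ]] with α, β ∈ ℂ and |α|² + |β|² = 1 (so φ ∈ SU(2)). Define the 3×3 real matrix Φ = [[|α|²−|β|², 2Re(αβ̄), −2Im(αβ̄)], [−2Re(αβ), Re(α²−β²), −Im(α²+β²)], [−2Im(αβ), Im(α²−β²), Re(α²+β²)]]. Then Φ ∈ SO(3) (i.e. ΦᵀΦ = I and det Φ = 1) and φ·f(x)·φ⁻¹ = f(Φx) for all x ∈ ℝ³. -/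
set_option maxHeartbeats 1600000


open Matrix

noncomputable section

/-- e₁ = (i/2)[[1,0],[0,−1]]. -/
def e1 : Matrix (Fin 2) (Fin 2) ℂ := (Complex.I / 2) • !![1, 0; 0, -1]

/-- e₂ = (i/2)[[0,1],[1,0]]. -/
def e2 : Matrix (Fin 2) (Fin 2) ℂ := (Complex.I / 2) • !![0, 1; 1, 0]

/-- e₃ = (1/2)[[0,−1],[1,0]]. -/
def e3 : Matrix (Fin 2) (Fin 2) ℂ := (1 / 2 : ℂ) • !![0, -1; 1, 0]

/-- The linear map f : ℝ³ → M₂(ℂ), f(x) = x₁e₁ + x₂e₂ + x₃e₃. -/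
def fmap (x : Fin 3 → ℝ) : Matrix (Fin 2) (Fin 2) ℂ :=
  (x 0 : ℂ) • e1 + (x 1 : ℂ) • e2 + (x 2 : ℂ) • e3

/-- For φ = [[α,β],[−β̄,ᾱ]] ∈ SU(2), the explicitly given 3×3 real matrix Φ
belongs to SO(3) and satisfies φ f(x) φ⁻¹ = f(Φx) for all x ∈ ℝ³. -/
theorem statement1 (α β : ℂ) (h : ‖α‖ ^ 2 + ‖β‖ ^ 2 = 1) :
    let φ : Matrix (Fin 2) (Fin 2) ℂ := !![α, β; -(starRingEnd ℂ) β, (starRingEnd ℂ) α]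
    let Φ : Matrix (Fin 3) (Fin 3) ℝ :=
      !![‖α‖ ^ 2 - ‖β‖ ^ 2,
           2 * (α * (starRingEnd ℂ) β).re, -2 * (α * (starRingEnd ℂ) β).im;
         -2 * (α * β).re, (α ^ 2 - β ^ 2).re, -((α ^ 2 + β ^ 2).im);
         -2 * (α * β).im, (α ^ 2 - β ^ 2).im, (α ^ 2 + β ^ 2).re]
    Φᵀ * Φ = 1 ∧ Φ.det = 1 ∧
      ∀ x : Fin 3 → ℝ, φ * fmap x * φ⁻¹ = fmap (Φ.mulVec x) := by
  
  intro φ Φ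
  have hn : Complex.normSq α + Complex.normSq β = 1 := by
    simpa [Complex.sq_norm] using h
  have h' : α.re ^ 2 + α.im ^ 2 + β.re ^ 2 + β.im ^ 2 = 1 := by
    have := hn
    simp only [Complex.normSq_apply] at this
    linear_combination this
  have hc : α * (starRingEnd ℂ) α + β * (starRingEnd ℂ) β = 1 := by
    rw [Complex.mul_conj, Complex.mul_conj, ← Complex.ofReal_add, hn, Complex.ofReal_one]
  have habs1 : ‖α‖ ^ 2 = α.re ^ 2 + α.im ^ 2 := by
    rw [Complex.sq_norm, Complex.normSq_apply]; ring
  have habs2 : ‖β‖ ^ 2 = β.re ^ 2 + β.im ^ 2 := by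
    rw [Complex.sq_norm, Complex.normSq_apply]; ring
  refine ⟨?_, ?_, ?_⟩
  · ext i j
    fin_cases i <;> fin_cases j <;>
      simp [Φ, Matrix.mul_apply, Matrix.transpose_apply, Matrix.vecHead, Matrix.vecTail, Fin.sum_univ_three, habs1, habs2,
        Complex.mul_re, Complex.mul_im, Complex.sub_re, Complex.sub_im,
        Complex.add_re, Complex.add_im, Complex.conj_re, Complex.conj_im, pow_two,
        Matrix.one_apply] <;>
      first
        | linear_combination (α.re ^ 2 + α.im ^ 2 + β.re ^ 2 + β.im ^ 2 + 1) * h'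
        | ring1
  · simp [Φ, Matrix.det_fin_three, habs1, habs2,
      Complex.mul_re, Complex.mul_im, Complex.sub_re, Complex.sub_im,
      Complex.add_re, Complex.add_im, Complex.conj_re, Complex.conj_im, pow_two]
    linear_combination (α.re ^ 4 + α.im ^ 4 + β.re ^ 4 + β.im ^ 4 +
      2*(α.re^2*α.im^2 + α.re^2*β.re^2 + α.re^2*β.im^2 + α.im^2*β.re^2 + α.im^2*β.im^2 + β.re^2*β.im^2) +
      α.re ^ 2 + α.im ^ 2 + β.re ^ 2 + β.im ^ 2 + 1) * h'
  · intro x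
    have hinv : φ⁻¹ = !![(starRingEnd ℂ) α, -β; (starRingEnd ℂ) β, α] := by
      apply inv_eq_right_inv
      ext i j
      fin_cases i <;> fin_cases j <;>
        simp [φ, Matrix.mul_apply, Fin.sum_univ_two, Matrix.one_apply] <;>
        first | linear_combination hc | ring1
    rw [hinv]
    ext i j
    fin_cases i <;> fin_cases j <;>
      simp [φ, Φ, fmap, e1, e2, e3, habs1, habs2, Matrix.mul_apply, Matrix.mulVec, dotProduct,
        Fin.sum_univ_two, Fin.sum_univ_three, habs1, habs2, Complex.ext_iff,
        Complex.mul_re, Complex.mul_im, Complex.sub_re, Complex.sub_im, Complex.div_re,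
        Complex.div_im, Complex.normSq_apply, Complex.add_re, Complex.add_im,
        Complex.conj_re, Complex.conj_im, pow_two] <;>
      constructor <;> ring
end
end

section
/- Let Φ = [Φᵢⱼ] ∈ SO(3) with tr Φ ≠ −1. Define α = (1 + tr Φ + i(Φ₃₂ − Φ₂₃)) / (2√(1 + tr Φ)) and β = (Φ₁₂ − Φ₂₁ + i(Φ₁₃ − Φ₃₁)) / (2√(1 + tr Φ)), and φ = [[α, β],[−β̄, ᾱ]]. Then |α|² + |β|² = 1 (so φ ∈ SU(2)) and φ·f(x)·φ⁻¹ = f(Φx) for all x ∈ ℝ³. -/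
open Matrix

noncomputable section

lemma key_conj (w x y z : ℝ) (v : Fin 3 → ℝ) :
    !![(w:ℂ) + x * Complex.I, (y:ℂ) + z * Complex.I;
       -((y:ℂ) - z * Complex.I), (w:ℂ) - x * Complex.I] * fmap v *
    !![(w:ℂ) - x * Complex.I, -((y:ℂ) + z * Complex.I);
       (y:ℂ) - z * Complex.I, (w:ℂ) + x * Complex.I] =
    fmap (fun i => ![(w^2+x^2-y^2-z^2) * v 0 + 2*(w*y+x*z) * v 1 + 2*(w*z-x*y) * v 2,
                    2*(x*z-w*y) * v 0 + (w^2-x^2-y^2+z^2) * v 1 - 2*(w*x+y*z) * v 2,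
                    -2*(w*z+x*y) * v 0 + 2*(w*x-y*z) * v 1 + (w^2-x^2+y^2-z^2) * v 2] i) := by
  have hI := Complex.I_sq
  ext i j
  fin_cases i <;> fin_cases j <;>
    simp [fmap, e1, e2, e3, Matrix.mul_apply, Fin.sum_univ_two]
  · linear_combination (-(1/2:ℂ)*Complex.I*(x:ℂ)^2*(v 0 : ℂ) - Complex.I*(x:ℂ)*(z:ℂ)*(v 1:ℂ) + (1/2:ℂ)*Complex.I*(z:ℂ)^2*(v 0:ℂ)) * hI
  · linear_combination ((1/2:ℂ)*Complex.I*(x:ℂ)^2*(v 1:ℂ) - Complex.I*(x:ℂ)*(z:ℂ)*(v 0:ℂ) - (1/2:ℂ)*Complex.I*(z:ℂ)^2*(v 1:ℂ) + (w:ℂ)*(x:ℂ)*(v 1:ℂ) - (w:ℂ)*(z:ℂ)*(v 0:ℂ) - (1/2:ℂ)*(x:ℂ)^2*(v 2:ℂ) - (x:ℂ)*(y:ℂ)*(v 0:ℂ) - (y:ℂ)*(z:ℂ)*(v 1:ℂ) - (1/2:ℂ)*(z:ℂ)^2*(v 2:ℂ)) * hI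
  · linear_combination ((1/2:ℂ)*Complex.I*(x:ℂ)^2*(v 1:ℂ) - Complex.I*(x:ℂ)*(z:ℂ)*(v 0:ℂ) - (1/2:ℂ)*Complex.I*(z:ℂ)^2*(v 1:ℂ) - (w:ℂ)*(x:ℂ)*(v 1:ℂ) + (w:ℂ)*(z:ℂ)*(v 0:ℂ) + (1/2:ℂ)*(x:ℂ)^2*(v 2:ℂ) + (x:ℂ)*(y:ℂ)*(v 0:ℂ) + (y:ℂ)*(z:ℂ)*(v 1:ℂ) + (1/2:ℂ)*(z:ℂ)^2*(v 2:ℂ)) * hI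
  · linear_combination ((1/2:ℂ)*Complex.I*(x:ℂ)^2*(v 0:ℂ) + Complex.I*(x:ℂ)*(z:ℂ)*(v 1:ℂ) - (1/2:ℂ)*Complex.I*(z:ℂ)^2*(v 0:ℂ)) * hI

/-- Given Φ ∈ SO(3) with tr Φ ≠ −1, the matrix φ = [[α,β],[−β̄,ᾱ]] with
α = (1 + tr Φ + i(Φ₃₂ − Φ₂₃))/(2√(1+tr Φ)), β = (Φ₁₂ − Φ₂₁ + i(Φ₁₃ − Φ₃₁))/(2√(1+tr Φ))
belongs to SU(2) and satisfies φ f(x) φ⁻¹ = f(Φx) for all x ∈ ℝ³. -/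
theorem statement2 (Φ : Matrix (Fin 3) (Fin 3) ℝ)
    (hO : Φᵀ * Φ = 1) (hdet : Φ.det = 1) (htr : Φ.trace ≠ -1) :
    let α : ℂ := (((1 + Φ.trace : ℝ) : ℂ) + ((Φ 2 1 - Φ 1 2 : ℝ) : ℂ) * Complex.I) /
      ((2 * Real.sqrt (1 + Φ.trace) : ℝ) : ℂ)
    let β : ℂ := (((Φ 0 1 - Φ 1 0 : ℝ) : ℂ) + ((Φ 0 2 - Φ 2 0 : ℝ) : ℂ) * Complex.I) /
      ((2 * Real.sqrt (1 + Φ.trace) : ℝ) : ℂ)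
    let φ : Matrix (Fin 2) (Fin 2) ℂ := !![α, β; -(starRingEnd ℂ) β, (starRingEnd ℂ) α]
    ‖α‖ ^ 2 + ‖β‖ ^ 2 = 1 ∧
      ∀ x : Fin 3 → ℝ, φ * fmap x * φ⁻¹ = fmap (Φ.mulVec x) := by
  intro α β φ
  have hRR : Φ * Φᵀ = 1 := mul_eq_one_comm.mpr hO
  have hadj : Φ.adjugate = Φᵀ := by
    calc Φ.adjugate = Φ.adjugate * (Φ * Φᵀ) := by rw [hRR, Matrix.mul_one]
    _ = (Φ.adjugate * Φ) * Φᵀ := by rw [Matrix.mul_assoc]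
    _ = Φᵀ := by rw [Matrix.adjugate_mul, hdet, one_smul, Matrix.one_mul]
  have hA00 : Φ 1 1 * Φ 2 2 - Φ 1 2 * Φ 2 1 = Φ 0 0 := by
    have := congrFun (congrFun hadj 0) 0
    rw [Matrix.eta_fin_three Φ] at this
    simp [Matrix.adjugate_fin_three] at this
    linear_combination this
  have hA01 : Φ 1 2 * Φ 2 0 - Φ 1 0 * Φ 2 2 = Φ 0 1 := by
    have := congrFun (congrFun hadj 1) 0
    rw [Matrix.eta_fin_three Φ] at this
    simp [Matrix.adjugate_fin_three] at this
    linear_combination this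
  have hA02 : Φ 1 0 * Φ 2 1 - Φ 1 1 * Φ 2 0 = Φ 0 2 := by
    have := congrFun (congrFun hadj 2) 0
    rw [Matrix.eta_fin_three Φ] at this
    simp [Matrix.adjugate_fin_three] at this
    linear_combination this
  have hC00 : Φ 0 0 * Φ 0 0 + Φ 1 0 * Φ 1 0 + Φ 2 0 * Φ 2 0 = 1 := by
    have := congrFun (congrFun hO 0) 0
    simpa [Matrix.mul_apply, Fin.sum_univ_three, Matrix.one_apply] using this
  have hC01 : Φ 0 0 * Φ 0 1 + Φ 1 0 * Φ 1 1 + Φ 2 0 * Φ 2 1 = 0 := by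
    have := congrFun (congrFun hO 0) 1
    simpa [Matrix.mul_apply, Fin.sum_univ_three, Matrix.one_apply] using this
  have hC02 : Φ 0 0 * Φ 0 2 + Φ 1 0 * Φ 1 2 + Φ 2 0 * Φ 2 2 = 0 := by
    have := congrFun (congrFun hO 0) 2
    simpa [Matrix.mul_apply, Fin.sum_univ_three, Matrix.one_apply] using this
  have hC11 : Φ 0 1 * Φ 0 1 + Φ 1 1 * Φ 1 1 + Φ 2 1 * Φ 2 1 = 1 := by
    have := congrFun (congrFun hO 1) 1
    simpa [Matrix.mul_apply, Fin.sum_univ_three, Matrix.one_apply] using this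
  have hC12 : Φ 0 1 * Φ 0 2 + Φ 1 1 * Φ 1 2 + Φ 2 1 * Φ 2 2 = 0 := by
    have := congrFun (congrFun hO 1) 2
    simpa [Matrix.mul_apply, Fin.sum_univ_three, Matrix.one_apply] using this
  have hR00 : Φ 0 0 * Φ 0 0 + Φ 0 1 * Φ 0 1 + Φ 0 2 * Φ 0 2 = 1 := by
    have := congrFun (congrFun hRR 0) 0
    simpa [Matrix.mul_apply, Fin.sum_univ_three, Matrix.one_apply] using this
  have hR01 : Φ 0 0 * Φ 1 0 + Φ 0 1 * Φ 1 1 + Φ 0 2 * Φ 1 2 = 0 := by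
    have := congrFun (congrFun hRR 0) 1
    simpa [Matrix.mul_apply, Fin.sum_univ_three, Matrix.one_apply] using this
  have hR02 : Φ 0 0 * Φ 2 0 + Φ 0 1 * Φ 2 1 + Φ 0 2 * Φ 2 2 = 0 := by
    have := congrFun (congrFun hRR 0) 2
    simpa [Matrix.mul_apply, Fin.sum_univ_three, Matrix.one_apply] using this
  have hR11 : Φ 1 0 * Φ 1 0 + Φ 1 1 * Φ 1 1 + Φ 1 2 * Φ 1 2 = 1 := by
    have := congrFun (congrFun hRR 1) 1
    simpa [Matrix.mul_apply, Fin.sum_univ_three, Matrix.one_apply] using this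
  have hR12 : Φ 1 0 * Φ 2 0 + Φ 1 1 * Φ 2 1 + Φ 1 2 * Φ 2 2 = 0 := by
    have := congrFun (congrFun hRR 1) 2
    simpa [Matrix.mul_apply, Fin.sum_univ_three, Matrix.one_apply] using this
  have hR22 : Φ 2 0 * Φ 2 0 + Φ 2 1 * Φ 2 1 + Φ 2 2 * Φ 2 2 = 1 := by
    have := congrFun (congrFun hRR 2) 2
    simpa [Matrix.mul_apply, Fin.sum_univ_three, Matrix.one_apply] using this
  have hP : 4 * (1 + (Φ 0 0 + Φ 1 1 + Φ 2 2)) = (1 + (Φ 0 0 + Φ 1 1 + Φ 2 2))^2 + (Φ 2 1 - Φ 1 2)^2 + (Φ 0 1 - Φ 1 0)^2 + (Φ 0 2 - Φ 2 0)^2 := by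
    linear_combination (-1) * hR00 + (-1) * hR11 + ((-2) * Φ 2 2) * hR11 + ((2) * Φ 1 2) * hR12 + ((2) * Φ 2 1) * hR12 + (-1) * hR22 + ((-2) * Φ 1 1) * hR22 + (-2) * hA00 + ((2) * Φ 1 1) * hA00 + ((2) * Φ 2 2) * hA00 + ((-2) * Φ 1 0) * hA01 + ((-2) * Φ 2 0) * hA02
  have hB00 : 4 * (1 + (Φ 0 0 + Φ 1 1 + Φ 2 2)) * Φ 0 0 = (1 + (Φ 0 0 + Φ 1 1 + Φ 2 2))^2 + (Φ 2 1 - Φ 1 2)^2 - (Φ 0 1 - Φ 1 0)^2 - (Φ 0 2 - Φ 2 0)^2 := by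
    linear_combination (1) * hR00 + (2) * hC00 + (-1) * hR11 + ((2) * Φ 2 2) * hR11 + ((-2) * Φ 1 2) * hR12 + ((-2) * Φ 2 1) * hR12 + (-1) * hR22 + ((2) * Φ 1 1) * hR22 + (-2) * hA00 + ((-2) * Φ 1 1) * hA00 + ((-2) * Φ 2 2) * hA00 + ((2) * Φ 1 0) * hA01 + ((2) * Φ 2 0) * hA02
  have hB11 : 4 * (1 + (Φ 0 0 + Φ 1 1 + Φ 2 2)) * Φ 1 1 = (1 + (Φ 0 0 + Φ 1 1 + Φ 2 2))^2 - (Φ 2 1 - Φ 1 2)^2 - (Φ 0 1 - Φ 1 0)^2 + (Φ 0 2 - Φ 2 0)^2 := by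
    linear_combination (-1) * hR00 + (1) * hR11 + ((2) * Φ 2 2) * hR11 + (2) * hC11 + ((-2) * Φ 1 2) * hR12 + ((2) * Φ 2 1) * hR12 + (-1) * hR22 + ((-2) * Φ 1 1) * hR22 + (2) * hA00 + ((-2) * Φ 1 1) * hA00 + ((2) * Φ 2 2) * hA00 + ((2) * Φ 1 0) * hA01 + ((-2) * Φ 2 0) * hA02
  have hB22 : 4 * (1 + (Φ 0 0 + Φ 1 1 + Φ 2 2)) * Φ 2 2 = (1 + (Φ 0 0 + Φ 1 1 + Φ 2 2))^2 - (Φ 2 1 - Φ 1 2)^2 + (Φ 0 1 - Φ 1 0)^2 - (Φ 0 2 - Φ 2 0)^2 := by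
    linear_combination (1) * hR00 + (-2) * hC00 + (1) * hR11 + ((-2) * Φ 2 2) * hR11 + (-2) * hC11 + ((2) * Φ 1 2) * hR12 + ((-2) * Φ 2 1) * hR12 + (3) * hR22 + ((2) * Φ 1 1) * hR22 + (2) * hA00 + ((2) * Φ 1 1) * hA00 + ((-2) * Φ 2 2) * hA00 + ((-2) * Φ 1 0) * hA01 + ((2) * Φ 2 0) * hA02
  have hB01 : 2 * (1 + (Φ 0 0 + Φ 1 1 + Φ 2 2)) * Φ 0 1 = (1 + (Φ 0 0 + Φ 1 1 + Φ 2 2)) * (Φ 0 1 - Φ 1 0) + (Φ 2 1 - Φ 1 2) * (Φ 0 2 - Φ 2 0) := by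
    linear_combination (Φ 1 0) * hC00 + (1) * hR01 + ((-1) * Φ 0 0) * hR01 + (1) * hC01 + (Φ 1 1) * hC01 + (Φ 1 2) * hC02 + ((-1) * Φ 1 0) * hR11 + ((-1) * Φ 1 0) * hR22 + (-1) * hA01 + ((-1) * Φ 2 2) * hA01 + (Φ 2 1) * hA02
  have hB02 : 2 * (1 + (Φ 0 0 + Φ 1 1 + Φ 2 2)) * Φ 0 2 = (1 + (Φ 0 0 + Φ 1 1 + Φ 2 2)) * (Φ 0 2 - Φ 2 0) - (Φ 2 1 - Φ 1 2) * (Φ 0 1 - Φ 1 0) := by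
    linear_combination (1) * hR02 + (1) * hC02 + ((-1) * Φ 2 0) * hR11 + (Φ 1 0) * hR12 + (Φ 1 2) * hA01 + (-1) * hA02 + ((-1) * Φ 1 1) * hA02
  have hB10 : 2 * (1 + (Φ 0 0 + Φ 1 1 + Φ 2 2)) * Φ 1 0 = (Φ 2 1 - Φ 1 2) * (Φ 0 2 - Φ 2 0) - (1 + (Φ 0 0 + Φ 1 1 + Φ 2 2)) * (Φ 0 1 - Φ 1 0) := by
    linear_combination (Φ 1 0) * hC00 + (1) * hR01 + ((-1) * Φ 0 0) * hR01 + (1) * hC01 + (Φ 1 1) * hC01 + (Φ 1 2) * hC02 + ((-1) * Φ 1 0) * hR11 + ((-1) * Φ 1 0) * hR22 + (-1) * hA01 + ((-1) * Φ 2 2) * hA01 + (Φ 2 1) * hA02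
  have hB12 : 2 * (1 + (Φ 0 0 + Φ 1 1 + Φ 2 2)) * Φ 1 2 = -((1 + (Φ 0 0 + Φ 1 1 + Φ 2 2)) * (Φ 2 1 - Φ 1 2)) - (Φ 0 1 - Φ 1 0) * (Φ 0 2 - Φ 2 0) := by
    linear_combination (Φ 1 2) * hR00 + ((-1) * Φ 1 2) * hC00 + ((-1) * Φ 0 2) * hR01 + (Φ 1 0) * hC02 + ((-1) * Φ 2 1) * hR11 + ((-1) * Φ 1 2) * hC11 + (1) * hR12 + (Φ 1 1) * hR12 + (1) * hC12 + (Φ 1 1) * hC12 + ((-1) * Φ 1 2) * hA00 + ((-1) * Φ 2 1) * hA00 + (Φ 2 0) * hA01 + (Φ 1 0) * hA02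
  have hB20 : 2 * (1 + (Φ 0 0 + Φ 1 1 + Φ 2 2)) * Φ 2 0 = -((1 + (Φ 0 0 + Φ 1 1 + Φ 2 2)) * (Φ 0 2 - Φ 2 0)) - (Φ 2 1 - Φ 1 2) * (Φ 0 1 - Φ 1 0) := by
    linear_combination (1) * hR02 + (1) * hC02 + ((-1) * Φ 2 0) * hR11 + (Φ 1 0) * hR12 + (Φ 1 2) * hA01 + (-1) * hA02 + ((-1) * Φ 1 1) * hA02
  have hB21 : 2 * (1 + (Φ 0 0 + Φ 1 1 + Φ 2 2)) * Φ 2 1 = (1 + (Φ 0 0 + Φ 1 1 + Φ 2 2)) * (Φ 2 1 - Φ 1 2) - (Φ 0 1 - Φ 1 0) * (Φ 0 2 - Φ 2 0) := by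
    linear_combination (Φ 1 2) * hR00 + ((-1) * Φ 1 2) * hC00 + ((-1) * Φ 0 2) * hR01 + (Φ 1 0) * hC02 + ((-1) * Φ 2 1) * hR11 + ((-1) * Φ 1 2) * hC11 + (1) * hR12 + (Φ 1 1) * hR12 + (1) * hC12 + (Φ 1 1) * hC12 + ((-1) * Φ 1 2) * hA00 + ((-1) * Φ 2 1) * hA00 + (Φ 2 0) * hA01 + (Φ 1 0) * hA02

  have hαdef : α = (((1 + Φ.trace : ℝ) : ℂ) + ((Φ 2 1 - Φ 1 2 : ℝ) : ℂ) * Complex.I) / ((2 * Real.sqrt (1 + Φ.trace) : ℝ) : ℂ) := rfl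
  have hβdef : β = (((Φ 0 1 - Φ 1 0 : ℝ) : ℂ) + ((Φ 0 2 - Φ 2 0 : ℝ) : ℂ) * Complex.I) / ((2 * Real.sqrt (1 + Φ.trace) : ℝ) : ℂ) := rfl
  have hφdef : φ = !![α, β; -(starRingEnd ℂ) β, (starRingEnd ℂ) α] := rfl
  have htrace : Φ.trace = Φ 0 0 + Φ 1 1 + Φ 2 2 := Matrix.trace_fin_three Φ
  have hge : (0:ℝ) ≤ 1 + Φ.trace := by
    have h4 : (0:ℝ) ≤ 4 * (1 + (Φ 0 0 + Φ 1 1 + Φ 2 2)) := by rw [hP]; positivity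
    rw [htrace]; linarith
  have ht0 : (0:ℝ) < 1 + Φ.trace := by
    rcases hge.eq_or_lt with h|h
    · exact absurd (by linarith : Φ.trace = -1) htr
    · exact h
  set s : ℝ := Real.sqrt (1 + Φ.trace) with hs_def
  have hs2 : s^2 = 1 + Φ.trace := Real.sq_sqrt hge
  have hs0 : (0:ℝ) < s := Real.sqrt_pos.2 ht0
  have hs2' : s^2 = 1 + (Φ 0 0 + Φ 1 1 + Φ 2 2) := by rw [hs2, htrace]
  have hsne : s ≠ 0 := hs0.ne'
  obtain ⟨a1, ha1⟩ : ∃ t : ℝ, 2*s*t = Φ 2 1 - Φ 1 2 := ⟨(Φ 2 1 - Φ 1 2)/(2*s), by field_simp⟩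
  obtain ⟨a2, ha2⟩ : ∃ t : ℝ, 2*s*t = Φ 0 1 - Φ 1 0 := ⟨(Φ 0 1 - Φ 1 0)/(2*s), by field_simp⟩
  obtain ⟨a3, ha3⟩ : ∃ t : ℝ, 2*s*t = Φ 0 2 - Φ 2 0 := ⟨(Φ 0 2 - Φ 2 0)/(2*s), by field_simp⟩
  have h4s2 : (4*s^2 : ℝ) ≠ 0 := by positivity
  have hnorm : (s/2)^2 + a1^2 + a2^2 + a3^2 = 1 := by
    apply mul_left_cancel₀ h4s2
    linear_combination (-1) * hP + ((1 + (Φ 0 0 + Φ 1 1 + Φ 2 2)) + s^2 - 4) * hs2' + ((Φ 2 1 - Φ 1 2) + 2*s*a1) * ha1 + ((Φ 0 1 - Φ 1 0) + 2*s*a2) * ha2 + ((Φ 0 2 - Φ 2 0) + 2*s*a3) * ha3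
  have hE00 : Φ 0 0 = (s/2)^2 + a1^2 - a2^2 - a3^2 := by
    apply mul_left_cancel₀ h4s2
    linear_combination hB00 + (4*Φ 0 0 - (1 + (Φ 0 0 + Φ 1 1 + Φ 2 2)) - s^2) * hs2' + (-1) * (((Φ 2 1 - Φ 1 2) + 2*s*a1) * ha1) + (1) * (((Φ 0 1 - Φ 1 0) + 2*s*a2) * ha2) + (1) * (((Φ 0 2 - Φ 2 0) + 2*s*a3) * ha3)
  have hE01 : Φ 0 1 = 2*((s/2)*a2 + a1*a3) := by
    apply mul_left_cancel₀ h4s2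
    linear_combination 2 * hB01 + (4*Φ 0 1 - 2*(Φ 0 1 - Φ 1 0)) * hs2' + (-2) * (s^2 * ha2) + (-4) * ((s*a1) * ha3) + (-2) * ((Φ 0 2 - Φ 2 0) * ha1)
  have hE02 : Φ 0 2 = 2*((s/2)*a3 - a1*a2) := by
    apply mul_left_cancel₀ h4s2
    linear_combination 2 * hB02 + (4*Φ 0 2 - 2*(Φ 0 2 - Φ 2 0)) * hs2' + (-2) * (s^2 * ha3) + (4) * ((s*a1) * ha2) + (2) * ((Φ 0 1 - Φ 1 0) * ha1)
  have hE10 : Φ 1 0 = 2*(a1*a3 - (s/2)*a2) := by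
    apply mul_left_cancel₀ h4s2
    linear_combination 2 * hB10 + (4*Φ 1 0 - -2*(Φ 0 1 - Φ 1 0)) * hs2' + (2) * (s^2 * ha2) + (-4) * ((s*a1) * ha3) + (-2) * ((Φ 0 2 - Φ 2 0) * ha1)
  have hE11 : Φ 1 1 = (s/2)^2 - a1^2 - a2^2 + a3^2 := by
    apply mul_left_cancel₀ h4s2
    linear_combination hB11 + (4*Φ 1 1 - (1 + (Φ 0 0 + Φ 1 1 + Φ 2 2)) - s^2) * hs2' + (1) * (((Φ 2 1 - Φ 1 2) + 2*s*a1) * ha1) + (1) * (((Φ 0 1 - Φ 1 0) + 2*s*a2) * ha2) + (-1) * (((Φ 0 2 - Φ 2 0) + 2*s*a3) * ha3)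
  have hE12 : Φ 1 2 = -(2*((s/2)*a1 + a2*a3)) := by
    apply mul_left_cancel₀ h4s2
    linear_combination 2 * hB12 + (4*Φ 1 2 - -2*(Φ 2 1 - Φ 1 2)) * hs2' + (2) * (s^2 * ha1) + (4) * ((s*a2) * ha3) + (2) * ((Φ 0 2 - Φ 2 0) * ha2)
  have hE20 : Φ 2 0 = -(2*((s/2)*a3 + a1*a2)) := by
    apply mul_left_cancel₀ h4s2
    linear_combination 2 * hB20 + (4*Φ 2 0 - -2*(Φ 0 2 - Φ 2 0)) * hs2' + (2) * (s^2 * ha3) + (4) * ((s*a1) * ha2) + (2) * ((Φ 0 1 - Φ 1 0) * ha1)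
  have hE21 : Φ 2 1 = 2*((s/2)*a1 - a2*a3) := by
    apply mul_left_cancel₀ h4s2
    linear_combination 2 * hB21 + (4*Φ 2 1 - 2*(Φ 2 1 - Φ 1 2)) * hs2' + (-2) * (s^2 * ha1) + (4) * ((s*a2) * ha3) + (2) * ((Φ 0 2 - Φ 2 0) * ha2)
  have hE22 : Φ 2 2 = (s/2)^2 - a1^2 + a2^2 - a3^2 := by
    apply mul_left_cancel₀ h4s2
    linear_combination hB22 + (4*Φ 2 2 - (1 + (Φ 0 0 + Φ 1 1 + Φ 2 2)) - s^2) * hs2' + (1) * (((Φ 2 1 - Φ 1 2) + 2*s*a1) * ha1) + (-1) * (((Φ 0 1 - Φ 1 0) + 2*s*a2) * ha2) + (1) * (((Φ 0 2 - Φ 2 0) + 2*s*a3) * ha3)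
  have hd2s : ((2*s : ℝ) : ℂ) ≠ 0 := by
    exact_mod_cast (by positivity : (2*s:ℝ) ≠ 0)
  have hs2c : (s:ℂ)^2 = 1 + (Φ.trace : ℂ) := by exact_mod_cast hs2
  have ha1c : 2*(s:ℂ)*(a1:ℂ) = ((Φ 2 1 : ℝ):ℂ) - ((Φ 1 2 : ℝ):ℂ) := by exact_mod_cast ha1
  have ha2c : 2*(s:ℂ)*(a2:ℂ) = ((Φ 0 1 : ℝ):ℂ) - ((Φ 1 0 : ℝ):ℂ) := by exact_mod_cast ha2
  have ha3c : 2*(s:ℂ)*(a3:ℂ) = ((Φ 0 2 : ℝ):ℂ) - ((Φ 2 0 : ℝ):ℂ) := by exact_mod_cast ha3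
  have hα : α = ((s/2 : ℝ) : ℂ) + ((a1 : ℝ) : ℂ) * Complex.I := by
    rw [hαdef, div_eq_iff hd2s]
    push_cast
    linear_combination (-1 : ℂ) * hs2c - Complex.I * ha1c
  have hβ : β = ((a2 : ℝ) : ℂ) + ((a3 : ℝ) : ℂ) * Complex.I := by
    rw [hβdef, div_eq_iff hd2s]
    push_cast
    linear_combination (-1 : ℂ) * ha2c - Complex.I * ha3c
  have hnc : ((s:ℝ):ℂ)^2/4 + ((a1:ℝ):ℂ)^2 + ((a2:ℝ):ℂ)^2 + ((a3:ℝ):ℂ)^2 = 1 := by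
    have h : s^2/4 + a1^2 + a2^2 + a3^2 = (1:ℝ) := by linear_combination hnorm
    exact_mod_cast h
  have hconjα : (starRingEnd ℂ) α = ((s/2 : ℝ) : ℂ) - ((a1 : ℝ) : ℂ) * Complex.I := by
    rw [hα]
    simp only [map_add, _root_.map_mul, Complex.conj_ofReal, Complex.conj_I]
    ring
  have hconjβ : (starRingEnd ℂ) β = ((a2 : ℝ) : ℂ) - ((a3 : ℝ) : ℂ) * Complex.I := by
    rw [hβ]
    simp only [map_add, _root_.map_mul, Complex.conj_ofReal, Complex.conj_I]
    ring
  have hφeq : φ = !![((s/2 : ℝ):ℂ) + ((a1:ℝ):ℂ) * Complex.I, ((a2:ℝ):ℂ) + ((a3:ℝ):ℂ) * Complex.I;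
      -(((a2:ℝ):ℂ) - ((a3:ℝ):ℂ) * Complex.I), ((s/2 : ℝ):ℂ) - ((a1:ℝ):ℂ) * Complex.I] := by
    rw [hφdef, hconjα, hconjβ, hα, hβ]
  have hinv : φ⁻¹ = !![((s/2 : ℝ):ℂ) - ((a1:ℝ):ℂ) * Complex.I, -(((a2:ℝ):ℂ) + ((a3:ℝ):ℂ) * Complex.I);
      ((a2:ℝ):ℂ) - ((a3:ℝ):ℂ) * Complex.I, ((s/2 : ℝ):ℂ) + ((a1:ℝ):ℂ) * Complex.I] := by
    apply Matrix.inv_eq_right_inv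
    rw [hφeq]
    ext i j
    fin_cases i <;> fin_cases j
    all_goals simp [Matrix.mul_apply, Fin.sum_univ_two, Matrix.one_apply]
    all_goals first
      | ring1
      | linear_combination hnc - (((a1:ℝ):ℂ)^2 + ((a3:ℝ):ℂ)^2) * Complex.I_sq
  constructor
  · rw [hα, hβ, Complex.sq_norm, Complex.sq_norm, Complex.normSq_apply, Complex.normSq_apply]
    simp only [Complex.add_re, Complex.add_im, Complex.ofReal_re, Complex.ofReal_im,
      Complex.mul_re, Complex.mul_im, Complex.I_re, Complex.I_im]
    ring_nf
    linear_combination hnorm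
  · intro x
    rw [hinv, hφeq, key_conj (s/2) a1 a2 a3 x]
    have hv0 : ((s/2)^2 + a1^2 - a2^2 - a3^2) * x 0 + 2*((s/2)*a2 + a1*a3) * x 1 +
        2*((s/2)*a3 - a1*a2) * x 2 = Φ.mulVec x 0 := by
      simp [Matrix.mulVec, dotProduct, Fin.sum_univ_three]
      linear_combination (-(x 0)) * hE00 + (-(x 1)) * hE01 + (-(x 2)) * hE02
    have hv1 : 2*(a1*a3 - (s/2)*a2) * x 0 + ((s/2)^2 - a1^2 - a2^2 + a3^2) * x 1 -
        2*((s/2)*a1 + a2*a3) * x 2 = Φ.mulVec x 1 := by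
      simp [Matrix.mulVec, dotProduct, Fin.sum_univ_three]
      linear_combination (-(x 0)) * hE10 + (-(x 1)) * hE11 + (-(x 2)) * hE12
    have hv2 : -2*((s/2)*a3 + a1*a2) * x 0 + 2*((s/2)*a1 - a2*a3) * x 1 +
        ((s/2)^2 - a1^2 + a2^2 - a3^2) * x 2 = Φ.mulVec x 2 := by
      simp [Matrix.mulVec, dotProduct, Fin.sum_univ_three]
      linear_combination (-(x 0)) * hE20 + (-(x 1)) * hE21 + (-(x 2)) * hE22
    refine congrArg fmap (funext fun i => ?_)
    fin_cases i
    · exact hv0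
    · exact hv1
    · exact hv2
end
end
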